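/- Let λ be a maximal unrefinable partition of T_{n,n−2k} = n(n+1)/2 − (n−2k) (where 2 ≤ 2k ≤ n−4) with largest part λ_t = 2n−5, n−2 parts, and n−3 missing parts. Then in the associated Young diagram Y = KN(S_λ), the first row and first column both contain n−2 cells, and h_{i,1} = h_{1,i} for all 1 ≤ i ≤ n−2; consequently h_{i,j} = h_{j,i} for all valid i, j, i.e., Y is self-conjugate. -/

import Mathlib

/-- A partition into distinct parts, encoded as a `Finset ℕ` of its parts, is *refinable*
if some part can be replaced by two or more distinct positive integers, none of which is
already a part, summing to it. -/
def Refinable (P : Finset ℕ) : Prop :=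
  ∃ a ∈ P, ∃ B : Finset ℕ, 2 ≤ B.card ∧ (∀ b ∈ B, 0 < b ∧ b ∉ P) ∧ B.sum id = a

/-- The `i`-th largest element (0-based) of `P`. -/
def partDesc (P : Finset ℕ) (i : ℕ) : ℕ := ((P.sort (· ≤ ·)).reverse).getD i 0

/-- Length of the `i`-th row (0-based) of the Young diagram obtained from the numerical
set `ℕ \ P` via the Keith–Nath transformation: the number of east steps (elements of the
numerical set) preceding the north step at the `i`-th largest gap. -/
def knRow (P : Finset ℕ) (i : ℕ) : ℕ :=
  ((Finset.range (partDesc P i)).filter (fun s => s ∉ P)).card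

/-- Length of the `j`-th column (0-based) of the Keith–Nath Young diagram. -/
def knCol (P : Finset ℕ) (j : ℕ) : ℕ :=
  ((Finset.range P.card).filter (fun i => j < knRow P i)).card

/-- Hook length of the cell `(i, j)` (0-based) of the Keith–Nath Young diagram:
arm + leg + 1. -/
def knHook (P : Finset ℕ) (i j : ℕ) : ℕ := knRow P i + knCol P j - i - j - 1

/-- Total number of cells of the Keith–Nath Young diagram. -/
def knCells (P : Finset ℕ) : ℕ := ∑ i ∈ Finset.range P.card, knRow P i

/-! ### Auxiliary lemmas -/

def knG (P : Finset ℕ) (x : ℕ) : ℕ := (P.filter (fun y => x < y)).card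

lemma pd_mem (P : Finset ℕ) {i : ℕ} (h : i < P.card) : partDesc P i ∈ P := by
  unfold partDesc
  rw [List.getD_eq_getElem _ _ (by simp [h])]
  rw [← Finset.mem_sort (· ≤ ·), ← List.mem_reverse]
  exact List.getElem_mem _

lemma pd_surj (P : Finset ℕ) {y : ℕ} (hy : y ∈ P) : ∃ i < P.card, partDesc P i = y := by
  rw [← Finset.mem_sort (· ≤ ·), ← List.mem_reverse, List.mem_iff_getElem] at hy
  obtain ⟨k, hk, hky⟩ := hy
  exact ⟨k, by simpa using hk, by unfold partDesc; rw [List.getD_eq_getElem _ _ hk, hky]⟩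

lemma pd_anti (P : Finset ℕ) {i j : ℕ} (hij : i < j) (h : j < P.card) :
    partDesc P j < partDesc P i := by
  unfold partDesc
  rw [List.getD_eq_getElem _ _ (by simp [h]), List.getD_eq_getElem _ _ (by simp; omega),
    List.getElem_reverse, List.getElem_reverse]
  have hs := (P.sortedLT_sort).pairwise
  rw [List.pairwise_iff_getElem] at hs
  apply hs
  simp only [Finset.length_sort]
  omega

lemma pd_sub (P : Finset ℕ) {i j : ℕ} (hij : i ≤ j) (h : j < P.card) :
    partDesc P j + (j - i) ≤ partDesc P i := by
  obtain ⟨d, rfl⟩ := Nat.le.dest hij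
  induction d with
  | zero => simp
  | succ d ih =>
      have h1 : i + d < P.card := by omega
      have h2 := pd_anti P (show i + d < i + (d + 1) by omega) h
      have h3 := ih (by omega) h1
      omega

lemma pd_injOn (P : Finset ℕ) {i j : ℕ} (hi : i < P.card) (hj : j < P.card)
    (h : partDesc P i = partDesc P j) : i = j := by
  rcases lt_trichotomy i j with h' | h' | h'
  · have := pd_anti P h' hj; omega
  · exact h'
  · have := pd_anti P h' hi; omega

lemma knG_iff (P : Finset ℕ) {i : ℕ} (hi : i < P.card) (x : ℕ) :
    x < partDesc P i ↔ i < knG P x := by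
  constructor
  · intro hx
    have hsub : (Finset.range (i + 1)).image (partDesc P) ⊆
        P.filter (fun y => x < y) := by
      intro y hy
      simp only [Finset.mem_image, Finset.mem_range] at hy
      obtain ⟨j, hj, rfl⟩ := hy
      have hjc : j < P.card := by omega
      refine Finset.mem_filter.2 ⟨pd_mem P hjc, ?_⟩
      rcases eq_or_lt_of_le (show j ≤ i by omega) with rfl | hlt
      · exact hx
      · exact lt_trans hx (pd_anti P hlt hi)
    have hcard : ((Finset.range (i + 1)).image (partDesc P)).card = i + 1 := by
      rw [Finset.card_image_of_injOn, Finset.card_range]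
      intro a ha b hb hab
      simp only [Finset.coe_range, Set.mem_Iio] at ha hb
      exact pd_injOn P (by omega) (by omega) hab
    have := Finset.card_le_card hsub
    unfold knG; omega
  · intro hG
    by_contra hx
    push_neg at hx
    have hsub : P.filter (fun y => x < y) ⊆ (Finset.range i).image (partDesc P) := by
      intro y hy
      rw [Finset.mem_filter] at hy
      obtain ⟨j, hj, rfl⟩ := pd_surj P hy.1
      simp only [Finset.mem_image, Finset.mem_range]
      refine ⟨j, ?_, rfl⟩
      by_contra hji
      push_neg at hji
      have : partDesc P j ≤ partDesc P i := by
        rcases eq_or_lt_of_le hji with rfl | hlt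
        · exact le_rfl
        · exact le_of_lt (pd_anti P hlt hj)
      omega
    have h1 := Finset.card_le_card hsub
    have h2 := Finset.card_image_le (s := Finset.range i) (f := partDesc P)
    rw [Finset.card_range] at h2
    unfold knG at hG
    omega

lemma knRow_add (P : Finset ℕ) (m : ℕ) (hc : P.card = m + 1) {i : ℕ} (hi : i < m + 1) :
    knRow P i + (m - i) = partDesc P i := by
  have hic : i < P.card := by omega
  -- elements of P that are ≥ partDesc P i : exactly i+1 of them
  have hge : (P.filter (fun y => partDesc P i ≤ y)) =
      (Finset.range (i + 1)).image (partDesc P) := by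
    apply Finset.Subset.antisymm
    · intro y hy
      rw [Finset.mem_filter] at hy
      obtain ⟨j, hj, rfl⟩ := pd_surj P hy.1
      simp only [Finset.mem_image, Finset.mem_range]
      refine ⟨j, ?_, rfl⟩
      by_contra hji
      push_neg at hji
      have := pd_anti P (show i < j by omega) hj
      omega
    · intro y hy
      simp only [Finset.mem_image, Finset.mem_range] at hy
      obtain ⟨j, hj, rfl⟩ := hy
      have hjc : j < P.card := by omega
      refine Finset.mem_filter.2 ⟨pd_mem P hjc, ?_⟩
      have := pd_sub P (show j ≤ i by omega) hic
      omega
  have hgecard : (P.filter (fun y => partDesc P i ≤ y)).card = i + 1 := by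
    rw [hge, Finset.card_image_of_injOn, Finset.card_range]
    intro a ha b hb hab
    simp only [Finset.coe_range, Set.mem_Iio] at ha hb
    exact pd_injOn P (by omega) (by omega) hab
  have hsplit := Finset.card_filter_add_card_filter_not
    (s := P) (p := fun y => partDesc P i ≤ y)
  have hltcard : (P.filter (fun y => y < partDesc P i)).card = m - i := by
    have : (P.filter (fun y => ¬ partDesc P i ≤ y)) =
        (P.filter (fun y => y < partDesc P i)) := by
      apply Finset.filter_congr; intro y _; simp [Nat.not_le]
    rw [this] at hsplit
    omega
  have hr : (Finset.range (partDesc P i)).filter (fun s => s ∈ P) =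
      P.filter (fun y => y < partDesc P i) := by
    ext a
    simp only [Finset.mem_filter, Finset.mem_range]
    tauto
  have hsplit2 := Finset.card_filter_add_card_filter_not
    (s := Finset.range (partDesc P i)) (p := fun s => s ∈ P)
  rw [Finset.card_range, hr, hltcard] at hsplit2
  have : (Finset.range (partDesc P i)).filter (fun s => ¬ s ∈ P) =
      (Finset.range (partDesc P i)).filter (fun s => s ∉ P) := rfl
  unfold knRow
  -- from hsplit2 : (m - i) + card(filter ∉) = partDesc P i
  omega

lemma knG_identity (P : Finset ℕ) (m : ℕ) (hc : P.card = m + 1)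
    (hmem : ∀ x ∈ P, 1 ≤ x ∧ x ≤ 2 * m + 1) (hmax : 2 * m + 1 ∈ P)
    (hcompl : ∀ x, 1 ≤ x → x ≤ 2 * m → (x ∈ P ↔ (2 * m + 1 - x) ∉ P))
    {x : ℕ} (hx : x ≤ 2 * m) :
    knG P x + x = knG P (2 * m - x) + m := by
  --       need P.filter (· ≤ y) = (Icc 1 y).filter (·∈P))
  have hd : ∀ y : ℕ, ((Finset.Icc 1 y).filter (fun a => a ∈ P)).card + knG P y = m + 1 := by
    intro y
    have h1 : (Finset.Icc 1 y).filter (fun a => a ∈ P) = P.filter (fun a => a ≤ y) := by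
      ext a
      simp only [Finset.mem_filter, Finset.mem_Icc]
      constructor
      · rintro ⟨⟨_, h2⟩, h3⟩; exact ⟨h3, h2⟩
      · rintro ⟨h2, h3⟩; exact ⟨⟨(hmem a h2).1, h3⟩, h2⟩
    have h2 : (P.filter (fun a => ¬ a ≤ y)) = P.filter (fun a => y < a) := by
      apply Finset.filter_congr; intro a _; simp [Nat.not_le]
    have h3 := Finset.card_filter_add_card_filter_not
      (s := P) (p := fun a => a ≤ y)
    rw [h2] at h3
    unfold knG
    rw [h1]
    omega
  -- (a) : knG P x = #((Icc (x+1) (2m)).filter (·∈P)) + 1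
  have ha : knG P x = ((Finset.Icc (x + 1) (2 * m)).filter (fun a => a ∈ P)).card + 1 := by
    have h1 : P.filter (fun y => x < y) =
        insert (2 * m + 1) ((Finset.Icc (x + 1) (2 * m)).filter (fun a => a ∈ P)) := by
      ext a
      simp only [Finset.mem_filter, Finset.mem_insert, Finset.mem_Icc]
      constructor
      · rintro ⟨haP, hxa⟩
        have := hmem a haP
        rcases eq_or_lt_of_le this.2 with h | h
        · exact Or.inl h
        · exact Or.inr ⟨⟨by omega, by omega⟩, haP⟩
      · rintro (rfl | ⟨⟨h1, h2⟩, h3⟩)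
        · exact ⟨hmax, by omega⟩
        · exact ⟨h3, by omega⟩
    unfold knG
    rw [h1, Finset.card_insert_of_notMem]
    simp only [Finset.mem_filter, Finset.mem_Icc]
    omega
  -- (b) : bijection via y ↦ 2m+1-y
  have hb : ((Finset.Icc (x + 1) (2 * m)).filter (fun a => a ∈ P)).card =
      ((Finset.Icc 1 (2 * m - x)).filter (fun a => a ∉ P)).card := by
    apply Finset.card_nbij' (i := fun a => 2 * m + 1 - a) (j := fun a => 2 * m + 1 - a)
    · intro a ha
      simp only [Finset.mem_coe, Finset.mem_filter, Finset.mem_Icc] at ha ⊢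
      refine ⟨⟨by omega, by omega⟩, ?_⟩
      exact (hcompl a (by omega) (by omega)).1 ha.2
    · intro a ha
      simp only [Finset.mem_coe, Finset.mem_filter, Finset.mem_Icc] at ha ⊢
      refine ⟨⟨by omega, by omega⟩, ?_⟩
      by_contra hcon
      exact ha.2 ((hcompl a (by omega) (by omega)).2 hcon)
    · intro a ha
      simp only [Finset.mem_coe, Finset.mem_filter, Finset.mem_Icc] at ha ⊢
      omega
    · intro a ha
      simp only [Finset.mem_coe, Finset.mem_filter, Finset.mem_Icc] at ha ⊢
      omega
  -- (c) : #((Icc 1 y).filter ∈P) + #((Icc 1 y).filter ∉P) = y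
  have hcc : ∀ y : ℕ, ((Finset.Icc 1 y).filter (fun a => a ∈ P)).card +
      ((Finset.Icc 1 y).filter (fun a => a ∉ P)).card = y := by
    intro y
    have := Finset.card_filter_add_card_filter_not
      (s := Finset.Icc 1 y) (p := fun a => a ∈ P)
    rw [Nat.card_Icc] at this
    omega
  have hd1 := hd (2 * m - x)
  have hc1 := hcc (2 * m - x)
  omega

lemma knRow_sym (P : Finset ℕ) (m : ℕ) (hc : P.card = m + 1)
    (hmem : ∀ x ∈ P, 1 ≤ x ∧ x ≤ 2 * m + 1) (hmax : 2 * m + 1 ∈ P)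
    (hcompl : ∀ x, 1 ≤ x → x ≤ 2 * m → (x ∈ P ↔ (2 * m + 1 - x) ∉ P))
    {i j : ℕ} (hi : i < m + 1) (hj : j < m + 1) :
    j < knRow P i ↔ i < knRow P j := by
  have hri := knRow_add P m hc hi
  have hrj := knRow_add P m hc hj
  have hEi := knG_iff P (show i < P.card by omega) (m + j - i)
  have hEj := knG_iff P (show j < P.card by omega) (m + i - j)
  have hid := knG_identity P m hc hmem hmax hcompl (x := m + j - i) (by omega)
  have h2 : 2 * m - (m + j - i) = m + i - j := by omega
  rw [h2] at hid
  omega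

lemma pd_zero (P : Finset ℕ) (m : ℕ) (hc : P.card = m + 1)
    (hmem : ∀ x ∈ P, 1 ≤ x ∧ x ≤ 2 * m + 1) (hmax : 2 * m + 1 ∈ P) :
    partDesc P 0 = 2 * m + 1 := by
  obtain ⟨i, hi, hpi⟩ := pd_surj P hmax
  rcases Nat.eq_zero_or_pos i with rfl | hpos
  · exact hpi
  · have := pd_anti P hpos hi
    have := hmem _ (pd_mem P (show 0 < P.card by omega))
    omega

lemma knRow_le (P : Finset ℕ) (m : ℕ) (hc : P.card = m + 1)
    (hmem : ∀ x ∈ P, 1 ≤ x ∧ x ≤ 2 * m + 1) (hmax : 2 * m + 1 ∈ P)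
    {i : ℕ} (hi : i < m + 1) : 1 ≤ knRow P i ∧ knRow P i ≤ m + 1 := by
  have hr := knRow_add P m hc hi
  have h0 := pd_zero P m hc hmem hmax
  have hub : partDesc P i + i ≤ 2 * m + 1 := by
    have := pd_sub P (show 0 ≤ i by omega) (show i < P.card by omega)
    omega
  have hlb : m + 1 ≤ partDesc P i + i := by
    have := pd_sub P (show i ≤ m by omega) (show m < P.card by omega)
    have := (hmem _ (pd_mem P (show m < P.card by omega))).1
    omega
  omega

lemma knCol_eq (P : Finset ℕ) (m : ℕ) (hc : P.card = m + 1)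
    (hmem : ∀ x ∈ P, 1 ≤ x ∧ x ≤ 2 * m + 1) (hmax : 2 * m + 1 ∈ P)
    (hcompl : ∀ x, 1 ≤ x → x ≤ 2 * m → (x ∈ P ↔ (2 * m + 1 - x) ∉ P))
    {j : ℕ} (hj : j < m + 1) : knCol P j = knRow P j := by
  unfold knCol
  rw [hc]
  have h1 : (Finset.range (m + 1)).filter (fun i => j < knRow P i) =
      (Finset.range (m + 1)).filter (fun i => i < knRow P j) := by
    apply Finset.filter_congr
    intro i hi
    simp only [Finset.mem_range] at hi
    exact knRow_sym P m hc hmem hmax hcompl hi hj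
  rw [h1]
  have h2 : (Finset.range (m + 1)).filter (fun i => i < knRow P j) =
      Finset.range (knRow P j) := by
    ext a
    simp only [Finset.mem_filter, Finset.mem_range]
    have := (knRow_le P m hc hmem hmax hj).2
    omega
  rw [h2, Finset.card_range]

/-- A maximal unrefinable partition of `T_{n, n-2k}` with largest part `2n - 5`, `n - 2`
parts and `n - 3` missing parts has a self-conjugate Keith–Nath Young diagram: first row
and first column both have `n - 2` cells, `h_{i,0} = h_{0,i}`, and `h_{i,j} = h_{j,i}`
for all cells (with the transposed cell also in the diagram). -/
theorem stmt12 (P : Finset ℕ) (n k : ℕ) (hk : 2 ≤ 2 * k) (hkn : 2 * k ≤ n - 4)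
    (hne : P.Nonempty) (hpos : ∀ p ∈ P, 0 < p) (hunref : ¬ Refinable P)
    (hsum : P.sum id = n * (n + 1) / 2 - (n - 2 * k))
    (hmax : P.max' hne = 2 * n - 5) (hcard : P.card = n - 2)
    (hmiss : ((Finset.Icc 1 (P.max' hne)) \ P).card = n - 3) :
    knRow P 0 = n - 2 ∧ knCol P 0 = n - 2 ∧
    (∀ i : ℕ, i < n - 2 → knHook P i 0 = knHook P 0 i) ∧
    (∀ i j : ℕ, i < P.card → j < knRow P i →
      (j < P.card ∧ i < knRow P j ∧ knHook P i j = knHook P j i)) := by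
  have hn6 : 6 ≤ n := by omega
  set m : ℕ := n - 3 with hm
  have hc : P.card = m + 1 := by omega
  have h2m : 2 * m + 1 = 2 * n - 5 := by omega
  have hmaxmem : 2 * m + 1 ∈ P := by
    rw [h2m, ← hmax]; exact P.max'_mem hne
  have hmem : ∀ x ∈ P, 1 ≤ x ∧ x ≤ 2 * m + 1 := by
    intro x hx
    refine ⟨hpos x hx, ?_⟩
    have := P.le_max' x hx
    omega
  -- Step (i): for 1 ≤ x ≤ 2m, not both x and 2m+1-x are missing
  have hstep1 : ∀ x, 1 ≤ x → x ≤ 2 * m → x ∉ P → (2 * m + 1 - x) ∉ P → False := by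
    intro x hx1 hx2 hxP hxP'
    apply hunref
    refine ⟨2 * m + 1, hmaxmem, {x, 2 * m + 1 - x}, ?_, ?_, ?_⟩
    · rw [Finset.card_pair (by omega)]
    · intro b hb
      rcases Finset.mem_insert.1 hb with rfl | hb
      · exact ⟨by omega, hxP⟩
      · rw [Finset.mem_singleton] at hb
        subst hb
        exact ⟨by omega, hxP'⟩
    · rw [Finset.sum_pair (by omega)]
      simp only [id]
      omega
  -- Step (ii): injectivity of pairing on P.erase (2m+1)
  have hcompl : ∀ x, 1 ≤ x → x ≤ 2 * m → (x ∈ P ↔ (2 * m + 1 - x) ∉ P) := by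
    set A : Finset ℕ := P.erase (2 * m + 1) with hA
    have hAcard : A.card = m := by
      rw [hA, Finset.card_erase_of_mem hmaxmem, hc]
      omega
    set φ : ℕ → ℕ := fun x => min x (2 * m + 1 - x) with hφ
    have hAmem : ∀ x ∈ A, 1 ≤ x ∧ x ≤ 2 * m := by
      intro x hx
      have hx1 := Finset.mem_of_mem_erase hx
      have hx2 := Finset.ne_of_mem_erase hx
      have := hmem x hx1
      omega
    have himg : A.image φ = Finset.Icc 1 m := by
      apply Finset.Subset.antisymm
      · intro y hy
        simp only [Finset.mem_image] at hy
        obtain ⟨x, hx, rfl⟩ := hy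
        have := hAmem x hx
        have hφx : φ x = min x (2 * m + 1 - x) := rfl
        rw [hφx, Finset.mem_Icc]
        omega
      · intro y hy
        simp only [Finset.mem_Icc] at hy
        simp only [Finset.mem_image]
        by_cases hyP : y ∈ P
        · refine ⟨y, Finset.mem_erase.2 ⟨by omega, hyP⟩, ?_⟩
          have hφy : φ y = min y (2 * m + 1 - y) := rfl
          rw [hφy]; omega
        · have hz : 2 * m + 1 - y ∈ P := by
            by_contra hz
            exact hstep1 y (by omega) (by omega) hyP hz
          refine ⟨2 * m + 1 - y, Finset.mem_erase.2 ⟨by omega, hz⟩, ?_⟩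
          have hφz : φ (2 * m + 1 - y) = min (2 * m + 1 - y) (2 * m + 1 - (2 * m + 1 - y)) := rfl
          rw [hφz]; omega
    have hinj : Set.InjOn φ A := by
      apply Finset.injOn_of_card_image_eq
      rw [himg, Nat.card_Icc, hAcard]
      omega
    intro x hx1 hx2
    constructor
    · intro hxP hzP
      have hxA : x ∈ A := Finset.mem_erase.2 ⟨by omega, hxP⟩
      have hzA : 2 * m + 1 - x ∈ A := Finset.mem_erase.2 ⟨by omega, hzP⟩
      have hxz : φ x = φ (2 * m + 1 - x) := by
        have e1 : φ x = min x (2 * m + 1 - x) := rfl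
        have e2 : φ (2 * m + 1 - x) = min (2 * m + 1 - x) (2 * m + 1 - (2 * m + 1 - x)) := rfl
        rw [e1, e2]; omega
      have := hinj hxA hzA hxz
      omega
    · intro hzP
      by_contra hxP
      exact hstep1 x hx1 hx2 hxP hzP
  -- assemble
  have hr0 : knRow P 0 = m + 1 := by
    have := knRow_add P m hc (show 0 < m + 1 by omega)
    have := pd_zero P m hc hmem hmaxmem
    omega
  have hcol := fun {j} (hj : j < m + 1) => knCol_eq P m hc hmem hmaxmem hcompl hj
  have hsym := fun {i j} (hi : i < m + 1) (hj : j < m + 1) =>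
    knRow_sym P m hc hmem hmaxmem hcompl hi hj
  have hle := fun {i} (hi : i < m + 1) => knRow_le P m hc hmem hmaxmem hi
  refine ⟨by omega, ?_, ?_, ?_⟩
  · rw [hcol (show 0 < m + 1 by omega)]; omega
  · intro i hi
    have hi' : i < m + 1 := by omega
    unfold knHook
    rw [hcol hi', hcol (show 0 < m + 1 by omega)]
    omega
  · intro i j hi hj
    have hi' : i < m + 1 := by omega
    have hjr : knRow P i ≤ m + 1 := (hle hi').2
    have hj' : j < m + 1 := by omega
    refine ⟨by omega, (hsym hi' hj').1 hj, ?_⟩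
    unfold knHook
    rw [hcol hi', hcol hj']
    omega
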